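/- Complete growth series of a free-like group: Let ι = ι₁ ⊔ ι₂ be a finite index set and let G be the free product of a family (G_i)_{i∈ι} of groups, where G_i is cyclic of order 2 for i ∈ ι₁ and G_i is infinite cyclic for i ∈ ι₂ (so G is a free-like group). Let S ⊆ G be the natural symmetric generating set consisting of the image of the nontrivial element of G_i for each i ∈ ι₁ and of the images of a chosen generator of G_i and of its inverse for each i ∈ ι₂, and set m = #ι₁ + 2·#ι₂ = #S. Then in the power series ring (ℤ[G])[[z]] one has CG_{G,S}(z) · (1 − (Σ_{s∈S} s)·z + (m−1)·z²) = 1 − z², where Σ_{s∈S} s is viewed as an element of the group ring ℤ[G]. -/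

import Mathlib

/-- The word norm of `g` with respect to a generating set `S`. -/
noncomputable def wordNorm {G : Type*} [Group G] (S : Set G) (g : G) : ℕ :=
  sInf {n | ∃ l : List G, (∀ s ∈ l, s ∈ S) ∧ l.length = n ∧ l.prod = g}

/-- The complete growth series `CG_{G,S}(z) ∈ (ℤ[G])[[z]]`: the coefficient of `z^n`
is the sum `Σ_{‖g‖_S = n} g` in the group ring `ℤ[G]`. -/
noncomputable def completeGrowthSeries {G : Type*} [Group G] (S : Set G) :
    PowerSeries (MonoidAlgebra ℤ G) :=
  PowerSeries.mk fun n => ∑ᶠ g ∈ {g : G | wordNorm S g = n}, MonoidAlgebra.of ℤ G g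

/-- The factors of a free-like group: a copy of `C₂` for each index in `ι₁` and a copy
of `ℤ` for each index in `ι₂`. -/
def FreeLikeFactors (ι₁ ι₂ : Type) : ι₁ ⊕ ι₂ → Type :=
  Sum.elim (fun _ => Multiplicative (ZMod 2)) (fun _ => Multiplicative ℤ)

instance (ι₁ ι₂ : Type) : ∀ i, Group (FreeLikeFactors ι₁ ι₂ i)
  | .inl _ => inferInstanceAs (Group (Multiplicative (ZMod 2)))
  | .inr _ => inferInstanceAs (Group (Multiplicative ℤ))

/-- The free-like group with `C₂` factors indexed by `ι₁` and `ℤ` factors indexed by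
`ι₂`: the free product of the family `FreeLikeFactors ι₁ ι₂`. -/
def FreeLikeGroup (ι₁ ι₂ : Type) : Type :=
  Monoid.CoprodI (FreeLikeFactors ι₁ ι₂)

instance (ι₁ ι₂ : Type) : Group (FreeLikeGroup ι₁ ι₂) :=
  inferInstanceAs (Group (Monoid.CoprodI (FreeLikeFactors ι₁ ι₂)))

/-- The natural symmetric generating set of a free-like group: the nontrivial element of
each `C₂` factor, together with the generator of each `ℤ` factor and its inverse. -/
def freeLikeGens (ι₁ ι₂ : Type) : Set (FreeLikeGroup ι₁ ι₂) :=
  (Set.range fun i : ι₁ => Monoid.CoprodI.of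
      (Multiplicative.ofAdd (1 : ZMod 2) : FreeLikeFactors ι₁ ι₂ (Sum.inl i))) ∪
  (Set.range fun i : ι₂ => Monoid.CoprodI.of
      (Multiplicative.ofAdd (1 : ℤ) : FreeLikeFactors ι₁ ι₂ (Sum.inr i))) ∪
  (Set.range fun i : ι₂ => Monoid.CoprodI.of
      (Multiplicative.ofAdd (-1 : ℤ) : FreeLikeFactors ι₁ ι₂ (Sum.inr i)))

/-! ### Development -/

open Monoid.CoprodI

namespace FreeLike

variable {ι₁ ι₂ : Type}

instance : ∀ i, DecidableEq (FreeLikeFactors ι₁ ι₂ i)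
  | .inl _ => inferInstanceAs (DecidableEq (Multiplicative (ZMod 2)))
  | .inr _ => inferInstanceAs (DecidableEq (Multiplicative ℤ))

/-- Identity coercion for `C₂` factors. -/
def toZ2 {i : ι₁} : FreeLikeFactors ι₁ ι₂ (Sum.inl i) → Multiplicative (ZMod 2) := id
def ofZ2 {i : ι₁} : Multiplicative (ZMod 2) → FreeLikeFactors ι₁ ι₂ (Sum.inl i) := id
def toZ {j : ι₂} : FreeLikeFactors ι₁ ι₂ (Sum.inr j) → Multiplicative ℤ := id
def ofZ {j : ι₂} : Multiplicative ℤ → FreeLikeFactors ι₁ ι₂ (Sum.inr j) := id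

@[simp] lemma toZ2_ofZ2 {i : ι₁} (a : Multiplicative (ZMod 2)) :
    toZ2 (ofZ2 (ι₁ := ι₁) (ι₂ := ι₂) (i := i) a) = a := rfl
@[simp] lemma toZ_ofZ {j : ι₂} (a : Multiplicative ℤ) :
    toZ (ofZ (ι₁ := ι₁) (ι₂ := ι₂) (j := j) a) = a := rfl
@[simp] lemma ofZ2_toZ2 {i : ι₁} (u : FreeLikeFactors ι₁ ι₂ (Sum.inl i)) : ofZ2 (toZ2 u) = u := rfl
@[simp] lemma ofZ_toZ {j : ι₂} (u : FreeLikeFactors ι₁ ι₂ (Sum.inr j)) : ofZ (toZ u) = u := rfl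
@[simp] lemma ofZ2_mul {i : ι₁} (a b : Multiplicative (ZMod 2)) :
    ofZ2 (ι₁ := ι₁) (ι₂ := ι₂) (i := i) (a * b) = ofZ2 a * ofZ2 b := rfl
@[simp] lemma ofZ_mul {j : ι₂} (a b : Multiplicative ℤ) :
    ofZ (ι₁ := ι₁) (ι₂ := ι₂) (j := j) (a * b) = ofZ a * ofZ b := rfl
@[simp] lemma ofZ2_one {i : ι₁} : ofZ2 (ι₁ := ι₁) (ι₂ := ι₂) (i := i) 1 = 1 := rfl
@[simp] lemma ofZ_one {j : ι₂} : ofZ (ι₁ := ι₁) (ι₂ := ι₂) (j := j) 1 = 1 := rfl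
@[simp] lemma ofZ2_inv {i : ι₁} (a : Multiplicative (ZMod 2)) :
    ofZ2 (ι₁ := ι₁) (ι₂ := ι₂) (i := i) a⁻¹ = (ofZ2 a)⁻¹ := rfl
@[simp] lemma ofZ_inv {j : ι₂} (a : Multiplicative ℤ) :
    ofZ (ι₁ := ι₁) (ι₂ := ι₂) (j := j) a⁻¹ = (ofZ a)⁻¹ := rfl
lemma ofZ2_eq_one_iff {i : ι₁} (a : Multiplicative (ZMod 2)) :
    ofZ2 (ι₁ := ι₁) (ι₂ := ι₂) (i := i) a = 1 ↔ a = 1 := Iff.rfl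
lemma ofZ_eq_one_iff {j : ι₂} (a : Multiplicative ℤ) :
    ofZ (ι₁ := ι₁) (ι₂ := ι₂) (j := j) a = 1 ↔ a = 1 := Iff.rfl
lemma ofZ2_inj {i : ι₁} {a b : Multiplicative (ZMod 2)} :
    ofZ2 (ι₁ := ι₁) (ι₂ := ι₂) (i := i) a = ofZ2 b ↔ a = b := Iff.rfl
lemma ofZ_inj {j : ι₂} {a b : Multiplicative ℤ} :
    ofZ (ι₁ := ι₁) (ι₂ := ι₂) (j := j) a = ofZ b ↔ a = b := Iff.rfl

/-- The norm of an element in a factor. -/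
def fnorm : ∀ i, FreeLikeFactors ι₁ ι₂ i → ℕ
  | .inl _ => fun u => if toZ2 u = 1 then 0 else 1
  | .inr _ => fun u => (Multiplicative.toAdd (toZ u)).natAbs

lemma fnorm_inl {i : ι₁} (a : Multiplicative (ZMod 2)) :
    fnorm (ι₁ := ι₁) (ι₂ := ι₂) (Sum.inl i) (ofZ2 a) = if a = 1 then 0 else 1 := rfl
lemma fnorm_inr {j : ι₂} (a : Multiplicative ℤ) :
    fnorm (ι₁ := ι₁) (ι₂ := ι₂) (Sum.inr j) (ofZ a) = (Multiplicative.toAdd a).natAbs := rfl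

@[simp] lemma fnorm_one : ∀ i, fnorm (ι₁ := ι₁) (ι₂ := ι₂) i 1 = 0
  | .inl _ => rfl
  | .inr _ => rfl

lemma fnorm_eq_zero : ∀ i, ∀ u : FreeLikeFactors ι₁ ι₂ i, fnorm i u = 0 ↔ u = 1
  | .inl i, u => by
      obtain ⟨a, rfl⟩ : ∃ a, ofZ2 a = u := ⟨toZ2 u, rfl⟩
      rw [fnorm_inl, ofZ2_eq_one_iff]
      split <;> simp_all
  | .inr j, u => by
      obtain ⟨a, rfl⟩ : ∃ a, ofZ a = u := ⟨toZ u, rfl⟩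
      rw [fnorm_inr, ofZ_eq_one_iff]
      constructor
      · intro h
        have : Multiplicative.toAdd a = 0 := by omega
        simpa using this
      · rintro rfl; simp

/-- The letters of the generating set belonging to factor `i`. -/
def lset : ∀ i, Finset (FreeLikeFactors ι₁ ι₂ i)
  | .inl _ => {ofZ2 (Multiplicative.ofAdd 1)}
  | .inr _ => {ofZ (Multiplicative.ofAdd 1), ofZ (Multiplicative.ofAdd (-1))}

lemma mem_lset_inl {i : ι₁} {u : FreeLikeFactors ι₁ ι₂ (Sum.inl i)} :
    u ∈ lset (Sum.inl i) ↔ u = ofZ2 (Multiplicative.ofAdd 1) := Finset.mem_singleton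
lemma mem_lset_inr {j : ι₂} {u : FreeLikeFactors ι₁ ι₂ (Sum.inr j)} :
    u ∈ lset (Sum.inr j) ↔ u = ofZ (Multiplicative.ofAdd 1) ∨ u = ofZ (Multiplicative.ofAdd (-1)) := by
  simp [lset]

lemma fnorm_lset : ∀ i, ∀ u ∈ lset (ι₁ := ι₁) (ι₂ := ι₂) i, fnorm i u = 1
  | .inl i, u, hu => by
      rw [mem_lset_inl] at hu
      subst hu; rw [fnorm_inl]; decide
  | .inr j, u, hu => by
      rw [mem_lset_inr] at hu
      rcases hu with rfl | rfl <;> rw [fnorm_inr] <;> rfl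

lemma lset_ne_one : ∀ i, ∀ u ∈ lset (ι₁ := ι₁) (ι₂ := ι₂) i, u ≠ 1 := by
  intro i u hu h
  have := fnorm_lset i u hu
  rw [h] at this; simp at this

lemma inv_mem_lset : ∀ i, ∀ u ∈ lset (ι₁ := ι₁) (ι₂ := ι₂) i, u⁻¹ ∈ lset i
  | .inl i, u, hu => by
      rw [mem_lset_inl] at hu ⊢
      subst hu
      rw [← ofZ2_inv, ofZ2_inj]
      decide
  | .inr j, u, hu => by
      rw [mem_lset_inr] at hu ⊢
      rcases hu with rfl | rfl
      · right; rw [← ofZ_inv, ofZ_inj]; rfl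
      · left; rw [← ofZ_inv, ofZ_inj]; rfl

/-- Multiplying by a letter changes the factor norm by exactly one. -/
lemma fnorm_step : ∀ i, ∀ m ∈ lset (ι₁ := ι₁) (ι₂ := ι₂) i, ∀ u : FreeLikeFactors ι₁ ι₂ i,
    fnorm i (m * u) = fnorm i u + 1 ∨ fnorm i (m * u) + 1 = fnorm i u
  | .inl i, m, hm, u => by
      rw [mem_lset_inl] at hm
      obtain ⟨a, rfl⟩ : ∃ a, ofZ2 a = u := ⟨toZ2 u, rfl⟩
      subst hm
      rw [← ofZ2_mul, fnorm_inl, fnorm_inl]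
      revert a; decide
  | .inr j, m, hm, u => by
      rw [mem_lset_inr] at hm
      obtain ⟨a, rfl⟩ : ∃ a, ofZ a = u := ⟨toZ u, rfl⟩
      rcases hm with rfl | rfl <;>
        · rw [← ofZ_mul, fnorm_inr, fnorm_inr]
          simp only [toAdd_mul, toAdd_ofAdd]
          omega

/-- The unique letter that decreases the norm of a nontrivial element `u` of factor `i`
when multiplied on the left. -/
def dlet : ∀ i, FreeLikeFactors ι₁ ι₂ i → FreeLikeFactors ι₁ ι₂ i
  | .inl _ => fun _ => ofZ2 (Multiplicative.ofAdd 1)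
  | .inr _ => fun u => if 0 < Multiplicative.toAdd (toZ u) then ofZ (Multiplicative.ofAdd (-1))
      else ofZ (Multiplicative.ofAdd 1)

lemma ofAdd_int_inj {a b : ℤ} : Multiplicative.ofAdd a = Multiplicative.ofAdd b ↔ a = b := Iff.rfl

lemma dlet_inl {i : ι₁} (u : FreeLikeFactors ι₁ ι₂ (Sum.inl i)) :
    dlet (Sum.inl i) u = ofZ2 (Multiplicative.ofAdd 1) := rfl
lemma dlet_inr {j : ι₂} (a : Multiplicative ℤ) :
    dlet (ι₁ := ι₁) (ι₂ := ι₂) (Sum.inr j) (ofZ a) =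
      if 0 < Multiplicative.toAdd a then ofZ (Multiplicative.ofAdd (-1))
      else ofZ (Multiplicative.ofAdd 1) := rfl

lemma dlet_mem_lset : ∀ i, ∀ u : FreeLikeFactors ι₁ ι₂ i, dlet i u ∈ lset i
  | .inl i, u => by rw [mem_lset_inl]; rfl
  | .inr j, u => by
      obtain ⟨a, rfl⟩ : ∃ a, ofZ a = u := ⟨toZ u, rfl⟩
      rw [mem_lset_inr, dlet_inr]
      split
      · right; rfl
      · left; rfl

lemma fnorm_descent_iff : ∀ i, ∀ m ∈ lset (ι₁ := ι₁) (ι₂ := ι₂) i,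
    ∀ u : FreeLikeFactors ι₁ ι₂ i, u ≠ 1 →
    (fnorm i (m * u) < fnorm i u ↔ m = dlet i u)
  | .inl i, m, hm, u, hu => by
      rw [mem_lset_inl] at hm
      obtain ⟨a, rfl⟩ : ∃ a, ofZ2 a = u := ⟨toZ2 u, rfl⟩
      subst hm
      rw [ne_eq, ofZ2_eq_one_iff] at hu
      rw [← ofZ2_mul, fnorm_inl, fnorm_inl]
      show _ ↔ ofZ2 _ = ofZ2 _
      rw [ofZ2_inj]
      revert hu; revert a; decide
  | .inr j, m, hm, u, hu => by
      rw [mem_lset_inr] at hm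
      obtain ⟨a, rfl⟩ : ∃ a, ofZ a = u := ⟨toZ u, rfl⟩
      rw [ne_eq, ofZ_eq_one_iff] at hu
      have hu' : Multiplicative.toAdd a ≠ 0 := by
        intro h
        exact hu ((ofAdd_toAdd a).symm.trans (by rw [h]; rfl))
      rcases hm with rfl | rfl <;>
        · rw [← ofZ_mul, fnorm_inr, fnorm_inr, dlet_inr]
          simp only [toAdd_mul, toAdd_ofAdd]
          split <;> rw [ofZ_inj] <;> rw [ofAdd_int_inj] <;> omega

end FreeLike

/-! ### Word length -/

namespace FreeLike
variable {ι₁ ι₂ : Type}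

attribute [local instance] Classical.decEq

open Monoid.CoprodI Word in
/-- The length of a reduced word. -/
def wlen (w : Word (FreeLikeFactors ι₁ ι₂)) : ℕ :=
  (w.toList.map fun p => fnorm p.1 p.2).sum

open Monoid.CoprodI Word in
/-- The length of a group element, computed via its reduced word. -/
noncomputable def glen (g : Monoid.CoprodI (FreeLikeFactors ι₁ ι₂)) : ℕ := wlen (Word.equiv g)

open Monoid.CoprodI Word

lemma wlen_empty : wlen (Word.empty : Word (FreeLikeFactors ι₁ ι₂)) = 0 := rfl

lemma wlen_rcons {i} (p : Word.Pair (FreeLikeFactors ι₁ ι₂) i) :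
    wlen (Word.rcons p) = fnorm i p.head + wlen p.tail := by
  rw [Word.rcons]
  split
  · simp_all [wlen]
  · simp [wlen, Word.cons]

lemma rcons_equivPair {i} (w : Word (FreeLikeFactors ι₁ ι₂)) :
    Word.rcons (Word.equivPair i w) = w := by
  rw [← Word.equivPair_symm]; exact (Word.equivPair i).symm_apply_apply w

lemma wlen_eq (i) (w : Word (FreeLikeFactors ι₁ ι₂)) :
    wlen w = fnorm i (Word.equivPair i w).head + wlen (Word.equivPair i w).tail := by
  conv_lhs => rw [← rcons_equivPair (i := i) w]
  rw [wlen_rcons]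

lemma equiv_mul {i} (m : FreeLikeFactors ι₁ ι₂ i) (g : Monoid.CoprodI (FreeLikeFactors ι₁ ι₂)) :
    Word.equiv (of m * g) = of m • Word.equiv g := by
  apply (Word.equiv).apply_eq_iff_eq_symm_apply.mpr
  rw [show ((Word.equiv (M := FreeLikeFactors ι₁ ι₂)).symm : _ → _) = Word.prod from rfl,
    Word.prod_smul]
  congr 1
  exact ((Word.equiv).symm_apply_apply g).symm

/-- The key relation for the length of `of m * g`. -/
lemma glen_of_mul {i} (m : FreeLikeFactors ι₁ ι₂ i) (g : Monoid.CoprodI (FreeLikeFactors ι₁ ι₂)) :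
    glen (of m * g) + fnorm i (Word.equivPair i (Word.equiv g)).head
      = glen g + fnorm i (m * (Word.equivPair i (Word.equiv g)).head) := by
  unfold glen
  rw [equiv_mul, Word.of_smul_def, wlen_rcons]
  conv_rhs => rw [wlen_eq i (Word.equiv g)]
  dsimp
  omega

lemma equiv_one : Word.equiv (1 : Monoid.CoprodI (FreeLikeFactors ι₁ ι₂)) = Word.empty := by
  apply (Word.equiv).apply_eq_iff_eq_symm_apply.mpr
  rw [show ((Word.equiv (M := FreeLikeFactors ι₁ ι₂)).symm : _ → _) = Word.prod from rfl]
  exact Word.prod_empty.symm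

lemma glen_eq_zero {g : Monoid.CoprodI (FreeLikeFactors ι₁ ι₂)} : glen g = 0 ↔ g = 1 := by
  constructor
  · intro h0
    have hlist : (Word.equiv g).toList = [] := by
      unfold glen wlen at h0
      rcases hl : (Word.equiv g).toList with _ | ⟨⟨i, u⟩, t⟩
      · rfl
      · exfalso
        rw [hl] at h0
        simp only [List.map_cons, List.sum_cons] at h0
        have : fnorm i u = 0 := by omega
        exact (Word.equiv g).ne_one _ (by rw [hl]; exact List.mem_cons_self)
          ((fnorm_eq_zero i u).mp this)
    have : Word.equiv g = Word.empty := Word.ext hlist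
    have := congrArg (Word.equiv (ι := ι₁ ⊕ ι₂)).symm this
    rw [Equiv.symm_apply_apply] at this
    rw [this]
    exact Word.prod_empty
  · rintro rfl
    rw [glen, equiv_one]; rfl

lemma glen_one : glen (1 : Monoid.CoprodI (FreeLikeFactors ι₁ ι₂)) = 0 := glen_eq_zero.mpr rfl

/-- Multiplying by a generator letter changes the length by exactly one. -/
lemma glen_step {i} (m : FreeLikeFactors ι₁ ι₂ i) (hm : m ∈ lset i) (g : Monoid.CoprodI (FreeLikeFactors ι₁ ι₂)) :
    glen (of m * g) = glen g + 1 ∨ glen (of m * g) + 1 = glen g := by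
  have h1 := glen_of_mul m g
  have h2 := fnorm_step i m hm (Word.equivPair i (Word.equiv g)).head
  omega

lemma head_eq_one_of_fstIdx_ne {i} {w : Word (FreeLikeFactors ι₁ ι₂)}
    (h : Word.fstIdx w ≠ some i) : (Word.equivPair i w).head = 1 := by
  rw [Word.equivPair_eq_of_fstIdx_ne h]

lemma fstIdx_eq_of_head_ne_one {i} {w : Word (FreeLikeFactors ι₁ ι₂)}
    (h : (Word.equivPair i w).head ≠ 1) : Word.fstIdx w = some i := by
  by_contra hc
  exact h (head_eq_one_of_fstIdx_ne hc)

lemma equivPair_head_of_ne_nil {w : Word (FreeLikeFactors ι₁ ι₂)} (hne : w.toList ≠ []) :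
    (Word.equivPair (w.toList.head hne).1 w).head = (w.toList.head hne).2 := by
  rw [Word.equivPair_head, dif_pos ⟨hne, rfl⟩]

/-- The descent criterion: `of m * g` is shorter than `g` iff the head of `g` lies in the
same factor as `m` and `m` is the distinguished descent letter. -/
lemma glen_descent_iff {i} (m : FreeLikeFactors ι₁ ι₂ i) (hm : m ∈ lset i)
    (g : Monoid.CoprodI (FreeLikeFactors ι₁ ι₂)) :
    glen (of m * g) < glen g ↔
      ((Word.equivPair i (Word.equiv g)).head ≠ 1 ∧
        m = dlet i (Word.equivPair i (Word.equiv g)).head) := by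
  have h1 := glen_of_mul m g
  set h := (Word.equivPair i (Word.equiv g)).head with hh
  by_cases h1' : h = 1
  · rw [h1'] at h1 ⊢
    rw [mul_one, fnorm_one] at h1
    have := fnorm_lset i m hm
    simp only [ne_eq, not_true_eq_false, false_and, iff_false, not_lt]
    omega
  · have key : glen (of m * g) < glen g ↔ fnorm i (m * h) < fnorm i h := by omega
    rw [key, fnorm_descent_iff i m hm h h1']
    simp [h1']

lemma ne_nil_of_ne_one {g : Monoid.CoprodI (FreeLikeFactors ι₁ ι₂)} (hg : g ≠ 1) : (Word.equiv g).toList ≠ [] := by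
  intro h
  apply hg
  rw [← glen_eq_zero, glen, wlen, h]
  rfl

lemma fstIdx_eq_head {w : Word (FreeLikeFactors ι₁ ι₂)} (hne : w.toList ≠ []) :
    Word.fstIdx w = some (w.toList.head hne).1 := by
  rw [Word.fstIdx, List.head?_eq_head hne]
  rfl

/-- Uniqueness of the descent letter. -/
theorem descent_unique {g : Monoid.CoprodI (FreeLikeFactors ι₁ ι₂)} (hg : g ≠ 1) {i} (m : FreeLikeFactors ι₁ ι₂ i)
    (hm : m ∈ lset i) (hd : glen (of m * g) < glen g) :
    of m = of (dlet ((Word.equiv g).toList.head (ne_nil_of_ne_one hg)).1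
      ((Word.equiv g).toList.head (ne_nil_of_ne_one hg)).2) := by
  rw [glen_descent_iff m hm g] at hd
  obtain ⟨hne1, hmd⟩ := hd
  have hfst := fstIdx_eq_of_head_ne_one hne1
  have hfst2 := fstIdx_eq_head (ne_nil_of_ne_one hg)
  rw [hfst2] at hfst
  obtain ⟨rfl⟩ : i = ((Word.equiv g).toList.head (ne_nil_of_ne_one hg)).1 := by
    exact (Option.some_inj.mp hfst).symm
  rw [hmd, equivPair_head_of_ne_nil (ne_nil_of_ne_one hg)]

/-- Existence of the descent letter. -/
theorem descent_exists {g : Monoid.CoprodI (FreeLikeFactors ι₁ ι₂)} (hg : g ≠ 1) :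
    glen (of (dlet ((Word.equiv g).toList.head (ne_nil_of_ne_one hg)).1
      ((Word.equiv g).toList.head (ne_nil_of_ne_one hg)).2) * g) < glen g := by
  set i₀ := ((Word.equiv g).toList.head (ne_nil_of_ne_one hg)).1
  set u := ((Word.equiv g).toList.head (ne_nil_of_ne_one hg)).2
  have hu : (Word.equivPair i₀ (Word.equiv g)).head = u :=
    equivPair_head_of_ne_nil (ne_nil_of_ne_one hg)
  have hune : u ≠ 1 := (Word.equiv g).ne_one _ (List.head_mem _)
  rw [glen_descent_iff _ (dlet_mem_lset i₀ u) g, hu]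
  exact ⟨hune, rfl⟩

end FreeLike

/-! ### The generating set as a Finset, and `wordNorm = glen` -/

namespace FreeLike
variable {ι₁ ι₂ : Type}

attribute [local instance] Classical.decEq

open Monoid.CoprodI Word

lemma equiv_of {i} (m : FreeLikeFactors ι₁ ι₂ i) (hm : m ≠ 1) :
    (Word.equiv (of m)).toList = [⟨i, m⟩] := by
  have h1 : Word.equiv (of m) = of m • Word.empty := by
    have := equiv_mul m (1 : Monoid.CoprodI (FreeLikeFactors ι₁ ι₂))
    rw [mul_one, equiv_one] at this
    exact this
  have hfst : Word.fstIdx (Word.empty : Word (FreeLikeFactors ι₁ ι₂)) ≠ some i := by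
    simp [Word.fstIdx, Word.empty]
  rw [h1, Word.of_smul_def, Word.equivPair_eq_of_fstIdx_ne hfst]
  simp only [mul_one]
  rw [Word.rcons, dif_neg hm]
  rfl

lemma of_ne_one {i} (m : FreeLikeFactors ι₁ ι₂ i) (hm : m ≠ 1) : of m ≠ 1 := by
  intro h
  have := congrArg (fun x => (Word.equiv x).toList) h
  rw [equiv_of m hm, equiv_one] at this
  simp [Word.empty] at this

lemma of_letter_inj {i j} {m : FreeLikeFactors ι₁ ι₂ i} {m' : FreeLikeFactors ι₁ ι₂ j}
    (hm : m ≠ 1) (hm' : m' ≠ 1) (h : of m = of m') :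
    (⟨i, m⟩ : Σ k, FreeLikeFactors ι₁ ι₂ k) = ⟨j, m'⟩ := by
  have := congrArg (fun x => (Word.equiv x).toList) h
  rw [equiv_of m hm, equiv_of m' hm'] at this
  simpa using this

section Fin
variable [Fintype ι₁] [Fintype ι₂]

/-- The natural generating set, as a `Finset`. -/
noncomputable def gset : Finset (Monoid.CoprodI (FreeLikeFactors ι₁ ι₂)) :=
  Finset.univ.biUnion fun i => (lset i).image fun m => of m

lemma mem_gset {s : Monoid.CoprodI (FreeLikeFactors ι₁ ι₂)} :
    s ∈ gset ↔ ∃ i, ∃ m ∈ lset i, of m = s := by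
  simp [gset]

lemma gset_ne_one {s : Monoid.CoprodI (FreeLikeFactors ι₁ ι₂)} (hs : s ∈ gset) : s ≠ 1 := by
  obtain ⟨i, m, hm, rfl⟩ := mem_gset.mp hs
  exact of_ne_one m (lset_ne_one i m hm)

lemma inv_mem_gset {s : Monoid.CoprodI (FreeLikeFactors ι₁ ι₂)} (hs : s ∈ gset) :
    s⁻¹ ∈ gset := by
  obtain ⟨i, m, hm, rfl⟩ := mem_gset.mp hs
  exact mem_gset.mpr ⟨i, m⁻¹, inv_mem_lset i m hm, map_inv _ m⟩

lemma card_gset : (gset (ι₁ := ι₁) (ι₂ := ι₂)).card = Fintype.card ι₁ + 2 * Fintype.card ι₂ := by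
  rw [gset, Finset.card_biUnion]
  · have hcard : ∀ i, ((lset (ι₁ := ι₁) (ι₂ := ι₂) i).image fun m => of m).card
        = (lset i).card := by
      intro i
      apply Finset.card_image_of_injOn
      intro a ha b hb hab
      have := of_letter_inj (lset_ne_one i a ha) (lset_ne_one i b hb) hab
      simpa using this
    simp only [hcard]
    have hl1 : ∀ i : ι₁, (lset (ι₁ := ι₁) (ι₂ := ι₂) (Sum.inl i)).card = 1 := fun i => rfl
    have hl2 : ∀ j : ι₂, (lset (ι₁ := ι₁) (ι₂ := ι₂) (Sum.inr j)).card = 2 := by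
      intro j
      rw [lset]
      rw [Finset.card_insert_of_notMem (by
        rw [Finset.mem_singleton, ofZ_inj, ofAdd_int_inj]; omega), Finset.card_singleton]
    rw [Fintype.sum_sum_type]
    simp [hl1, hl2, Finset.sum_const, mul_comm]
  · intro i _ j _ hij
    simp only [Finset.disjoint_left, Finset.mem_image]
    rintro s ⟨a, ha, rfl⟩ ⟨b, hb, hab⟩
    have := of_letter_inj (lset_ne_one j b hb) (lset_ne_one i a ha) hab
    exact hij (congrArg Sigma.fst this).symm

lemma glen_step_gset {s : Monoid.CoprodI (FreeLikeFactors ι₁ ι₂)} (hs : s ∈ gset) (g) :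
    glen (s * g) = glen g + 1 ∨ glen (s * g) + 1 = glen g := by
  obtain ⟨i, m, hm, rfl⟩ := mem_gset.mp hs
  exact glen_step m hm g

theorem exists_unique_descent {g : Monoid.CoprodI (FreeLikeFactors ι₁ ι₂)} (hg : g ≠ 1) :
    ∃! s, s ∈ gset (ι₁ := ι₁) (ι₂ := ι₂) ∧ glen (s * g) + 1 = glen g := by
  refine ⟨of (dlet ((Word.equiv g).toList.head (ne_nil_of_ne_one hg)).1
      ((Word.equiv g).toList.head (ne_nil_of_ne_one hg)).2),
    ⟨mem_gset.mpr ⟨_, _, dlet_mem_lset _ _, rfl⟩, ?_⟩, ?_⟩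
  · have h1 := descent_exists hg
    have h2 := glen_step (dlet ((Word.equiv g).toList.head (ne_nil_of_ne_one hg)).1
      ((Word.equiv g).toList.head (ne_nil_of_ne_one hg)).2) (dlet_mem_lset _ _) g
    omega
  · rintro s ⟨hs, hdesc⟩
    obtain ⟨i, m, hm, rfl⟩ := mem_gset.mp hs
    exact descent_unique hg m hm (by omega)

theorem exists_list (n : ℕ) : ∀ g : Monoid.CoprodI (FreeLikeFactors ι₁ ι₂), glen g = n →
    ∃ l : List (Monoid.CoprodI (FreeLikeFactors ι₁ ι₂)),
      (∀ s ∈ l, s ∈ gset) ∧ l.length = glen g ∧ l.prod = g := by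
  induction n using Nat.strong_induction_on with
  | _ n ih =>
    intro g hgn
    rcases Nat.eq_zero_or_pos n with rfl | hpos
    · refine ⟨[], by simp, by simp [hgn], by simpa using (glen_eq_zero.mp hgn).symm⟩
    · have hg : g ≠ 1 := fun h => by rw [h, glen_one] at hgn; omega
      obtain ⟨s, ⟨hs, hdesc⟩, -⟩ := exists_unique_descent hg
      obtain ⟨l, hl1, hl2, hl3⟩ := ih (glen (s * g)) (by omega) (s * g) rfl
      refine ⟨s⁻¹ :: l, ?_, ?_, ?_⟩
      · intro t ht
        rcases List.mem_cons.mp ht with rfl | ht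
        · exact inv_mem_gset hs
        · exact hl1 t ht
      · simp only [List.length_cons, hl2]; omega
      · rw [List.prod_cons, hl3, inv_mul_cancel_left]

lemma glen_prod_le (l : List (Monoid.CoprodI (FreeLikeFactors ι₁ ι₂)))
    (h : ∀ s ∈ l, s ∈ gset) : glen l.prod ≤ l.length := by
  induction l with
  | nil => simp [glen_one]
  | cons s l ih =>
    rw [List.prod_cons]
    have h1 := glen_step_gset (h s (List.mem_cons_self)) l.prod
    have h2 := ih fun t ht => h t (List.mem_cons_of_mem _ ht)
    simp only [List.length_cons]
    omega

theorem wordNorm_eq_glen (g : Monoid.CoprodI (FreeLikeFactors ι₁ ι₂)) :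
    wordNorm (↑(gset (ι₁ := ι₁) (ι₂ := ι₂)) : Set _) g = glen g := by
  obtain ⟨l, hl1, hl2, hl3⟩ := exists_list (glen g) g rfl
  apply le_antisymm
  · exact Nat.sInf_le ⟨l, fun s hs => hl1 s hs, hl2, hl3⟩
  · have hne : {n | ∃ l' : List (Monoid.CoprodI (FreeLikeFactors ι₁ ι₂)),
        (∀ s ∈ l', s ∈ (↑(gset (ι₁ := ι₁) (ι₂ := ι₂)) : Set _)) ∧ l'.length = n ∧
          l'.prod = g}.Nonempty := ⟨glen g, l, fun s hs => hl1 s hs, hl2, hl3⟩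
    obtain ⟨l', hl'1, hl'2, hl'3⟩ := Nat.sInf_mem hne
    rw [wordNorm, ← hl'2, ← hl'3] at *
    exact glen_prod_le l' fun s hs => hl'1 s hs

end Fin
end FreeLike

/-! ### Right descents and spheres -/

namespace FreeLike
variable {ι₁ ι₂ : Type} [Fintype ι₁] [Fintype ι₂]

attribute [local instance] Classical.decEq

open Monoid.CoprodI Word

lemma glen_inv (g : Monoid.CoprodI (FreeLikeFactors ι₁ ι₂)) : glen g⁻¹ = glen g := by
  have key : ∀ h : Monoid.CoprodI (FreeLikeFactors ι₁ ι₂), glen h⁻¹ ≤ glen h := by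
    intro h
    obtain ⟨l, hl1, hl2, hl3⟩ := exists_list (glen h) h rfl
    have hprod : (l.map fun x => x⁻¹).reverse.prod = h⁻¹ := by
      rw [← List.prod_inv_reverse, hl3]
    calc glen h⁻¹ = glen (l.map fun x => x⁻¹).reverse.prod := by rw [hprod]
      _ ≤ (l.map fun x => x⁻¹).reverse.length := by
          apply glen_prod_le
          intro s hs
          rw [List.mem_reverse, List.mem_map] at hs
          obtain ⟨t, ht, rfl⟩ := hs
          exact inv_mem_gset (hl1 t ht)
      _ = glen h := by simpa using hl2
  exact le_antisymm (key g) (by simpa using key g⁻¹)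

lemma glen_rstep {s : Monoid.CoprodI (FreeLikeFactors ι₁ ι₂)} (hs : s ∈ gset) (g) :
    glen (g * s) = glen g + 1 ∨ glen (g * s) + 1 = glen g := by
  have h1 : glen (g * s) = glen (s⁻¹ * g⁻¹) := by
    rw [← glen_inv (g * s), mul_inv_rev]
  rw [h1, ← glen_inv g]
  exact glen_step_gset (inv_mem_gset hs) g⁻¹

theorem exists_unique_rdescent {g : Monoid.CoprodI (FreeLikeFactors ι₁ ι₂)} (hg : g ≠ 1) :
    ∃! s, s ∈ gset (ι₁ := ι₁) (ι₂ := ι₂) ∧ glen (g * s) + 1 = glen g := by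
  obtain ⟨t, ⟨ht, htd⟩, htu⟩ := exists_unique_descent (inv_ne_one.mpr hg)
  have hgg : ∀ s : Monoid.CoprodI (FreeLikeFactors ι₁ ι₂), glen (g * s) = glen (s⁻¹ * g⁻¹) := by
    intro s
    rw [← glen_inv (g * s), mul_inv_rev]
  refine ⟨t⁻¹, ⟨inv_mem_gset ht, ?_⟩, ?_⟩
  · rw [hgg t⁻¹, inv_inv, ← glen_inv g]
    exact htd
  · rintro s ⟨hs, hsd⟩
    have hst : s⁻¹ = t := by
      apply htu
      refine ⟨inv_mem_gset hs, ?_⟩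
      rw [hgg s, ← glen_inv g] at hsd
      exact hsd
    rw [← hst, inv_inv]

/-- The unique right-descent generator of `g ≠ 1`. -/
noncomputable def dr (g : Monoid.CoprodI (FreeLikeFactors ι₁ ι₂)) :
    Monoid.CoprodI (FreeLikeFactors ι₁ ι₂) :=
  if hg : g = 1 then 1 else (exists_unique_rdescent (ι₁ := ι₁) (ι₂ := ι₂) hg).choose

lemma dr_spec {g : Monoid.CoprodI (FreeLikeFactors ι₁ ι₂)} (hg : g ≠ 1) :
    dr g ∈ gset ∧ glen (g * dr g) + 1 = glen g := by
  rw [dr, dif_neg hg]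
  exact (exists_unique_rdescent hg).choose_spec.1

lemma dr_eq {g s : Monoid.CoprodI (FreeLikeFactors ι₁ ι₂)} (hg : g ≠ 1) (hs : s ∈ gset)
    (h : glen (g * s) + 1 = glen g) : s = dr g := by
  rw [dr, dif_neg hg]
  exact (exists_unique_rdescent hg).choose_spec.2 s ⟨hs, h⟩

lemma sphere_finite (n : ℕ) : {g : Monoid.CoprodI (FreeLikeFactors ι₁ ι₂) | glen g = n}.Finite := by
  induction n with
  | zero =>
    apply Set.Finite.subset (Set.finite_singleton 1)
    intro g hg
    exact glen_eq_zero.mp hg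
  | succ n ih =>
    apply Set.Finite.subset (Set.Finite.image (fun p => p.1 * p.2)
      (Set.Finite.prod (gset (ι₁ := ι₁) (ι₂ := ι₂)).finite_toSet ih))
    intro g hg
    rw [Set.mem_setOf_eq] at hg
    have hg1 : g ≠ 1 := fun h => by rw [h, glen_one] at hg; exact Nat.succ_ne_zero n hg.symm
    obtain ⟨s, ⟨hs, hsd⟩, -⟩ := exists_unique_descent hg1
    refine ⟨(s⁻¹, s * g), ⟨inv_mem_gset hs, ?_⟩, by simp⟩
    show glen (s * g) = n
    omega

/-- The sphere of radius `n`, as a `Finset`. -/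
noncomputable def sph (n : ℕ) : Finset (Monoid.CoprodI (FreeLikeFactors ι₁ ι₂)) :=
  (sphere_finite n).toFinset

lemma mem_sph {g : Monoid.CoprodI (FreeLikeFactors ι₁ ι₂)} {n : ℕ} :
    g ∈ sph (ι₁ := ι₁) (ι₂ := ι₂) n ↔ glen g = n := by
  rw [sph, Set.Finite.mem_toFinset]; rfl

lemma sph_coe (n : ℕ) :
    ((sph (ι₁ := ι₁) (ι₂ := ι₂) n : Finset (Monoid.CoprodI (FreeLikeFactors ι₁ ι₂))) :
      Set (Monoid.CoprodI (FreeLikeFactors ι₁ ι₂))) = {g | glen g = n} := by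
  ext g; rw [Finset.mem_coe, mem_sph, Set.mem_setOf_eq]

lemma sph_zero : sph (ι₁ := ι₁) (ι₂ := ι₂) 0 = {1} := by
  ext g
  rw [mem_sph, Finset.mem_singleton, glen_eq_zero]

lemma glen_of_letter {i} {m : FreeLikeFactors ι₁ ι₂ i} (hm : m ∈ lset i) :
    glen (of m) = 1 := by
  rw [glen, wlen, equiv_of m (lset_ne_one i m hm)]
  simp [fnorm_lset i m hm]

lemma sph_one : sph (ι₁ := ι₁) (ι₂ := ι₂) 1 = gset := by
  ext g
  rw [mem_sph]
  constructor
  · intro hg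
    obtain ⟨l, hl1, hl2, hl3⟩ := exists_list (glen g) g rfl
    rw [hg] at hl2
    match l, hl2 with
    | [s], _ =>
      rw [List.prod_cons, List.prod_nil, mul_one] at hl3
      rw [← hl3]
      exact hl1 s (List.mem_cons_self)
  · intro hg
    obtain ⟨i, m, hm, rfl⟩ := mem_gset.mp hg
    exact glen_of_letter hm

end FreeLike

/-! ### The main recursion in the group ring -/

namespace FreeLike
variable (ι₁ ι₂ : Type) [Fintype ι₁] [Fintype ι₂]

attribute [local instance] Classical.decEq

open Monoid.CoprodI Word

/-- The sum of the sphere of radius `n` in the group ring. -/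
noncomputable def sphSum (n : ℕ) : MonoidAlgebra ℤ (Monoid.CoprodI (FreeLikeFactors ι₁ ι₂)) :=
  ∑ g ∈ sph n, MonoidAlgebra.of ℤ _ g

/-- The sum of the generators in the group ring. -/
noncomputable def genSum : MonoidAlgebra ℤ (Monoid.CoprodI (FreeLikeFactors ι₁ ι₂)) :=
  ∑ s ∈ gset, MonoidAlgebra.of ℤ _ s

variable {ι₁ ι₂}

lemma sphSum_zero : sphSum ι₁ ι₂ 0 = 1 := by
  rw [sphSum, sph_zero, Finset.sum_singleton, map_one]

lemma sphSum_one : sphSum ι₁ ι₂ 1 = genSum ι₁ ι₂ := by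
  rw [sphSum, sph_one, genSum]

lemma ne_one_of_mem_sph {g : Monoid.CoprodI (FreeLikeFactors ι₁ ι₂)} {k : ℕ}
    (hg : g ∈ sph (k + 1)) : g ≠ 1 := by
  rw [mem_sph] at hg
  intro h
  rw [h, glen_one] at hg
  exact Nat.succ_ne_zero k hg.symm

lemma ne_one_of_glen_pos {g : Monoid.CoprodI (FreeLikeFactors ι₁ ι₂)} {k : ℕ}
    (hg : glen g = k + 1) : g ≠ 1 := ne_one_of_mem_sph (mem_sph.mpr hg)

lemma filter_ascents_eq {h : Monoid.CoprodI (FreeLikeFactors ι₁ ι₂)} (hh : h ≠ 1) :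
    (gset.filter fun t => glen (h * t) = glen h + 1) = gset.erase (dr h) := by
  ext t
  simp only [Finset.mem_filter, Finset.mem_erase]
  constructor
  · rintro ⟨ht, hasc⟩
    refine ⟨fun he => ?_, ht⟩
    have := (dr_spec hh).2
    rw [← he] at this
    omega
  · rintro ⟨hne, ht⟩
    refine ⟨ht, ?_⟩
    rcases glen_rstep ht h with hca | hcd
    · exact hca
    · exact absurd (dr_eq hh ht hcd).symm (Ne.symm hne)

lemma card_filter_ascents {h : Monoid.CoprodI (FreeLikeFactors ι₁ ι₂)} (hh : h ≠ 1) :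
    ((gset.filter fun t => glen (h * t) = glen h + 1)).card + 1
      = (gset (ι₁ := ι₁) (ι₂ := ι₂)).card := by
  rw [filter_ascents_eq hh, Finset.card_erase_of_mem (dr_spec hh).1]
  have : 0 < (gset (ι₁ := ι₁) (ι₂ := ι₂)).card := Finset.card_pos.mpr ⟨_, (dr_spec hh).1⟩
  omega

lemma filter_ascents_one :
    ((gset (ι₁ := ι₁) (ι₂ := ι₂)).filter
      fun t => glen ((1 : Monoid.CoprodI (FreeLikeFactors ι₁ ι₂)) * t) = glen
        (1 : Monoid.CoprodI (FreeLikeFactors ι₁ ι₂)) + 1) = gset := by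
  apply Finset.filter_eq_self.mpr
  intro t ht
  rw [one_mul, glen_one]
  rw [← sph_one, mem_sph] at ht
  omega

/-- The fundamental recursion. -/
theorem main_rec (k : ℕ) :
    sphSum ι₁ ι₂ (k + 1) * genSum ι₁ ι₂
      = sphSum ι₁ ι₂ (k + 2)
        + ((((gset (ι₁ := ι₁) (ι₂ := ι₂)).card : ℤ) - 1) • sphSum ι₁ ι₂ k
        + (if k = 0 then 1 else 0)) := by
  classical
  rw [sphSum, genSum, Finset.sum_mul_sum]
  have hmul : ∀ g s : Monoid.CoprodI (FreeLikeFactors ι₁ ι₂),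
      (MonoidAlgebra.of ℤ _ g) * (MonoidAlgebra.of ℤ _ s) = MonoidAlgebra.of ℤ _ (g * s) :=
    fun g s => (map_mul (MonoidAlgebra.of ℤ _) _ _).symm
  simp only [hmul]
  have hsplit : ∀ g ∈ sph (ι₁ := ι₁) (ι₂ := ι₂) (k + 1), (∑ s ∈ gset, MonoidAlgebra.of ℤ _ (g * s))
      = MonoidAlgebra.of ℤ _ (g * dr g) + ∑ s ∈ gset.erase (dr g), MonoidAlgebra.of ℤ _ (g * s) :=
    fun g hg => (Finset.add_sum_erase _ _ (dr_spec (ne_one_of_mem_sph hg)).1).symm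
  rw [Finset.sum_congr rfl hsplit, Finset.sum_add_distrib]
  have hT2 : (∑ g ∈ sph (ι₁ := ι₁) (ι₂ := ι₂) (k + 1),
      ∑ s ∈ gset.erase (dr g), MonoidAlgebra.of ℤ _ (g * s)) = sphSum ι₁ ι₂ (k + 2) := by
    rw [sphSum, Finset.sum_sigma']
    apply Finset.sum_nbij' (i := fun p => p.1 * p.2) (j := fun h => ⟨h * dr h, (dr h)⁻¹⟩)
    · rintro ⟨g, s⟩ hp
      rw [Finset.mem_sigma] at hp
      obtain ⟨hg, hs⟩ := hp
      dsimp only at hg hs ⊢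
      rw [Finset.mem_erase] at hs
      rw [mem_sph] at hg ⊢
      have hg1 : g ≠ 1 := ne_one_of_glen_pos hg
      rcases glen_rstep hs.2 g with hca | hcd
      · omega
      · exact absurd (dr_eq hg1 hs.2 hcd).symm (Ne.symm hs.1)
    · intro h hh
      rw [mem_sph] at hh
      have hh1 : h ≠ 1 := ne_one_of_glen_pos hh
      obtain ⟨hdg, hdd⟩ := dr_spec hh1
      rw [Finset.mem_sigma]
      dsimp only
      rw [mem_sph]
      constructor
      · omega
      · rw [Finset.mem_erase]
        have hg'1 : h * dr h ≠ 1 := ne_one_of_glen_pos (show glen (h * dr h) = k + 1 by omega)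
        refine ⟨fun he => ?_, inv_mem_gset hdg⟩
        have hspec := (dr_spec hg'1).2
        rw [← he, mul_inv_cancel_right] at hspec
        omega
    · rintro ⟨g, s⟩ hp
      rw [Finset.mem_sigma] at hp
      obtain ⟨hg, hs⟩ := hp
      dsimp only at hg hs ⊢
      rw [Finset.mem_erase] at hs
      rw [mem_sph] at hg
      have hg1 : g ≠ 1 := ne_one_of_glen_pos hg
      have hgs : glen (g * s) = k + 2 := by
        rcases glen_rstep hs.2 g with hca | hcd
        · omega
        · exact absurd (dr_eq hg1 hs.2 hcd).symm (Ne.symm hs.1)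
      have hgs1 : g * s ≠ 1 := ne_one_of_glen_pos hgs
      have hdr : dr (g * s) = s⁻¹ := by
        refine (dr_eq hgs1 (inv_mem_gset hs.2) ?_).symm
        rw [mul_inv_cancel_right]
        omega
      have h1 : (g * s) * dr (g * s) = g := by rw [hdr, mul_inv_cancel_right]
      refine Sigma.ext ?_ ?_
      · simpa using h1
      · simp only [h1, hdr, inv_inv]
        exact heq_of_eq rfl
    · intro h hh
      rw [mem_sph] at hh
      have hh1 : h ≠ 1 := ne_one_of_glen_pos hh
      simp only [mul_inv_cancel_right]
    · rintro ⟨g, s⟩ _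
      rfl
  have hT1 : (∑ g ∈ sph (ι₁ := ι₁) (ι₂ := ι₂) (k + 1), MonoidAlgebra.of ℤ _ (g * dr g))
      = (((gset (ι₁ := ι₁) (ι₂ := ι₂)).card : ℤ) - 1) • sphSum ι₁ ι₂ k
        + (if k = 0 then 1 else 0) := by
    have hmaps : ∀ g ∈ sph (ι₁ := ι₁) (ι₂ := ι₂) (k + 1), g * dr g ∈ sph (ι₁ := ι₁) (ι₂ := ι₂) k := by
      intro g hg
      rw [mem_sph] at hg ⊢
      have := (dr_spec (ne_one_of_glen_pos hg)).2
      omega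
    rw [← Finset.sum_fiberwise_of_maps_to hmaps]
    have hfiber : ∀ h ∈ sph (ι₁ := ι₁) (ι₂ := ι₂) k,
        (∑ g ∈ (sph (k + 1)).filter (fun g => g * dr g = h), MonoidAlgebra.of ℤ _ (g * dr g))
          = ((gset.filter fun t => glen (h * t) = glen h + 1)).card • MonoidAlgebra.of ℤ _ h := by
      intro h hh
      rw [mem_sph] at hh
      have hconst : ∀ g ∈ (sph (ι₁ := ι₁) (ι₂ := ι₂) (k + 1)).filter (fun g => g * dr g = h),
          MonoidAlgebra.of ℤ (Monoid.CoprodI (FreeLikeFactors ι₁ ι₂)) (g * dr g)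
            = MonoidAlgebra.of ℤ (Monoid.CoprodI (FreeLikeFactors ι₁ ι₂)) h := by
        intro g hg
        rw [Finset.mem_filter] at hg
        rw [hg.2]
      rw [Finset.sum_congr rfl hconst, Finset.sum_const]
      congr 1
      apply Finset.card_nbij' (i := fun g => (dr g)⁻¹) (j := fun t => h * t)
      · intro g hg
        rw [Finset.mem_coe, Finset.mem_filter] at hg; beta_reduce
        obtain ⟨hg1, hg2⟩ := hg
        rw [mem_sph] at hg1
        have hgn1 : g ≠ 1 := ne_one_of_glen_pos hg1
        rw [Finset.mem_coe, Finset.mem_filter]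
        refine ⟨inv_mem_gset (dr_spec hgn1).1, ?_⟩
        have : h * (dr g)⁻¹ = g := by rw [← hg2, mul_inv_cancel_right]
        rw [this]
        omega
      · intro t ht
        rw [Finset.mem_coe, Finset.mem_filter] at ht; beta_reduce
        obtain ⟨ht1, ht2⟩ := ht
        rw [Finset.mem_coe, Finset.mem_filter, mem_sph]
        have hht1 : h * t ≠ 1 := ne_one_of_glen_pos (k := glen h) ht2
        have hdr : dr (h * t) = t⁻¹ := by
          refine (dr_eq hht1 (inv_mem_gset ht1) ?_).symm
          rw [mul_inv_cancel_right]
          omega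
        refine ⟨by omega, ?_⟩
        rw [hdr, mul_inv_cancel_right]
      · intro g hg
        rw [Finset.mem_coe, Finset.mem_filter] at hg; beta_reduce
        rw [← hg.2, mul_inv_cancel_right]
      · intro t ht
        rw [Finset.mem_coe, Finset.mem_filter] at ht; beta_reduce
        have hht1 : h * t ≠ 1 := ne_one_of_glen_pos (k := glen h) ht.2
        have hdr : dr (h * t) = t⁻¹ := by
          refine (dr_eq hht1 (inv_mem_gset ht.1) ?_).symm
          rw [mul_inv_cancel_right]
          omega
        rw [hdr, inv_inv]
    rw [Finset.sum_congr rfl hfiber]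
    have hper : ∀ h ∈ sph (ι₁ := ι₁) (ι₂ := ι₂) k,
        ((gset.filter fun t => glen (h * t) = glen h + 1)).card • MonoidAlgebra.of ℤ _ h
          = (((gset (ι₁ := ι₁) (ι₂ := ι₂)).card : ℤ) - 1) • MonoidAlgebra.of ℤ _ h
            + (if h = 1 then (1 : MonoidAlgebra ℤ (Monoid.CoprodI (FreeLikeFactors ι₁ ι₂))) else 0) := by
      intro h hh
      by_cases h1 : h = 1
      · subst h1
        rw [filter_ascents_one, if_pos rfl, map_one]
        rw [← natCast_zsmul, sub_smul, one_smul, sub_add_cancel]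
      · rw [if_neg h1, add_zero, ← natCast_zsmul]
        congr 1
        have := card_filter_ascents (ι₁ := ι₁) (ι₂ := ι₂) h1
        omega
    rw [Finset.sum_congr rfl hper, Finset.sum_add_distrib, ← Finset.smul_sum, ← sphSum]
    congr 1
    rw [Finset.sum_ite_eq' (sph k) 1 (fun _ => (1 : MonoidAlgebra ℤ (Monoid.CoprodI (FreeLikeFactors ι₁ ι₂))))]
    have : ((1 : Monoid.CoprodI (FreeLikeFactors ι₁ ι₂)) ∈ sph (ι₁ := ι₁) (ι₂ := ι₂) k) ↔ k = 0 := by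
      rw [mem_sph, glen_one, eq_comm]
    simp only [this]
  rw [hT1, hT2]
  abel

end FreeLike

/-! ### Bridging to the statement -/

namespace FreeLike
variable {ι₁ ι₂ : Type} [Fintype ι₁] [Fintype ι₂]

attribute [local instance] Classical.decEq

open Monoid.CoprodI Word

lemma gset_coe :
    ((gset (ι₁ := ι₁) (ι₂ := ι₂) : Finset (Monoid.CoprodI (FreeLikeFactors ι₁ ι₂))) :
      Set (Monoid.CoprodI (FreeLikeFactors ι₁ ι₂))) = freeLikeGens ι₁ ι₂ := by
  ext s
  simp only [Finset.mem_coe, mem_gset, freeLikeGens, Set.mem_union, Set.mem_range]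
  constructor
  · rintro ⟨i, m, hm, rfl⟩
    cases i with
    | inl i =>
      rw [mem_lset_inl] at hm
      subst hm
      exact Or.inl (Or.inl ⟨i, rfl⟩)
    | inr j =>
      rw [mem_lset_inr] at hm
      rcases hm with rfl | rfl
      · exact Or.inl (Or.inr ⟨j, rfl⟩)
      · exact Or.inr ⟨j, rfl⟩
  · rintro ((⟨i, rfl⟩ | ⟨j, rfl⟩) | ⟨j, rfl⟩)
    · exact ⟨Sum.inl i, ofZ2 (Multiplicative.ofAdd 1), mem_lset_inl.mpr rfl, rfl⟩
    · exact ⟨Sum.inr j, ofZ (Multiplicative.ofAdd 1), mem_lset_inr.mpr (Or.inl rfl), rfl⟩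
    · exact ⟨Sum.inr j, ofZ (Multiplicative.ofAdd (-1)), mem_lset_inr.mpr (Or.inr rfl), rfl⟩

lemma coeff_CG (n : ℕ) :
    (PowerSeries.coeff (R := MonoidAlgebra ℤ (Monoid.CoprodI (FreeLikeFactors ι₁ ι₂))) n)
        (completeGrowthSeries (G := Monoid.CoprodI (FreeLikeFactors ι₁ ι₂))
          (freeLikeGens ι₁ ι₂))
      = sphSum ι₁ ι₂ n := by
  unfold completeGrowthSeries; rw [PowerSeries.coeff_mk]
  have hset : {g : Monoid.CoprodI (FreeLikeFactors ι₁ ι₂) |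
      wordNorm (freeLikeGens ι₁ ι₂) g = n} = ↑(sph (ι₁ := ι₁) (ι₂ := ι₂) n) := by
    ext g
    have e := wordNorm_eq_glen (ι₁ := ι₁) (ι₂ := ι₂) g
    rw [gset_coe] at e
    rw [Set.mem_setOf_eq, Finset.mem_coe, mem_sph]
    exact iff_of_eq (congrArg (· = n) e)
  refine (congrArg (fun S : Set (Monoid.CoprodI (FreeLikeFactors ι₁ ι₂)) =>
    ∑ᶠ g ∈ S, MonoidAlgebra.of ℤ (Monoid.CoprodI (FreeLikeFactors ι₁ ι₂)) g) hset).trans ?_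
  rw [finsum_mem_coe_finset]
  rfl

lemma genSum_eq :
    (∑ᶠ s ∈ (freeLikeGens ι₁ ι₂ :
        Set (Monoid.CoprodI (FreeLikeFactors ι₁ ι₂))),
      MonoidAlgebra.of ℤ (Monoid.CoprodI (FreeLikeFactors ι₁ ι₂)) s) = genSum ι₁ ι₂ := by
  rw [show (∑ᶠ s ∈ (freeLikeGens ι₁ ι₂ : Set (Monoid.CoprodI (FreeLikeFactors ι₁ ι₂))),
      MonoidAlgebra.of ℤ (Monoid.CoprodI (FreeLikeFactors ι₁ ι₂)) s) =
      ∑ᶠ s ∈ ((gset (ι₁ := ι₁) (ι₂ := ι₂) : Finset (Monoid.CoprodI (FreeLikeFactors ι₁ ι₂))) : Set (Monoid.CoprodI (FreeLikeFactors ι₁ ι₂))),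
        MonoidAlgebra.of ℤ (Monoid.CoprodI (FreeLikeFactors ι₁ ι₂)) s from by rw [gset_coe]; rfl,
    finsum_mem_coe_finset]
  rfl

theorem final_co :
    completeGrowthSeries (G := Monoid.CoprodI (FreeLikeFactors ι₁ ι₂)) (freeLikeGens ι₁ ι₂) *
        (1 - PowerSeries.C (R := MonoidAlgebra ℤ (Monoid.CoprodI (FreeLikeFactors ι₁ ι₂)))
              (∑ᶠ s ∈ (freeLikeGens ι₁ ι₂ : Set (Monoid.CoprodI (FreeLikeFactors ι₁ ι₂))),
                MonoidAlgebra.of ℤ (Monoid.CoprodI (FreeLikeFactors ι₁ ι₂)) s)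
              * PowerSeries.X
            + PowerSeries.C (R := MonoidAlgebra ℤ (Monoid.CoprodI (FreeLikeFactors ι₁ ι₂)))
              ((((Fintype.card ι₁ + 2 * Fintype.card ι₂ : ℕ) : ℤ) - 1 : ℤ)
                : MonoidAlgebra ℤ (Monoid.CoprodI (FreeLikeFactors ι₁ ι₂)))
              * PowerSeries.X ^ 2) =
      1 - PowerSeries.X ^ 2 := by
  classical
  have key : ∀ F P Q : PowerSeries (MonoidAlgebra ℤ (Monoid.CoprodI (FreeLikeFactors ι₁ ι₂))),
      F * (1 - P * PowerSeries.X + Q * PowerSeries.X ^ 2)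
        = F - (F * P) * PowerSeries.X + ((F * Q) * PowerSeries.X) * PowerSeries.X := by
    intro F P Q
    noncomm_ring
  rw [key]
  apply PowerSeries.ext
  intro n
  rw [map_add, map_sub, map_sub]
  have hc : ∀ j : ℕ, sphSum ι₁ ι₂ j *
        (((((Fintype.card ι₁ + 2 * Fintype.card ι₂ : ℕ) : ℤ) - 1 : ℤ)
          : MonoidAlgebra ℤ (Monoid.CoprodI (FreeLikeFactors ι₁ ι₂))))
      = (((Fintype.card ι₁ + 2 * Fintype.card ι₂ : ℕ) : ℤ) - 1) • sphSum ι₁ ι₂ j := by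
    intro j
    rw [← (Int.cast_commute _ _).eq, ← zsmul_eq_mul]
  match n with
  | 0 =>
    rw [PowerSeries.coeff_zero_mul_X, coeff_CG, sphSum_zero]
    norm_num [PowerSeries.coeff_one, PowerSeries.coeff_X_pow, PowerSeries.coeff_zero_mul_X]
  | 1 =>
    rw [PowerSeries.coeff_succ_mul_X, PowerSeries.coeff_succ_mul_X,
      PowerSeries.coeff_zero_mul_X, PowerSeries.coeff_mul_C, coeff_CG, coeff_CG,
      sphSum_zero, sphSum_one, genSum_eq, one_mul]
    norm_num [PowerSeries.coeff_one, PowerSeries.coeff_X_pow]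
  | (n + 2) =>
    rw [PowerSeries.coeff_succ_mul_X, PowerSeries.coeff_succ_mul_X,
      PowerSeries.coeff_succ_mul_X, PowerSeries.coeff_mul_C, PowerSeries.coeff_mul_C,
      coeff_CG, coeff_CG, coeff_CG, genSum_eq, hc n]
    have hrec := main_rec (ι₁ := ι₁) (ι₂ := ι₂) n
    rw [card_gset] at hrec
    rw [hrec]
    rw [PowerSeries.coeff_one, PowerSeries.coeff_X_pow]
    rcases Nat.eq_zero_or_pos n with rfl | hn
    · norm_num
    · have h2 : ¬(n + 2 = 2) := by omega
      have h0 : ¬(n + 2 = 0) := by omega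
      have hn0 : ¬(n = 0) := by omega
      rw [if_neg h2, if_neg h0, if_neg hn0]
      abel

end FreeLike

/-- **Complete growth series of a free-like group**: if `G` is a free product of
`#ι₁` copies of `C₂` and `#ι₂` copies of `ℤ`, with natural symmetric generating set `S`
of cardinality `m = #ι₁ + 2·#ι₂`, then
`CG_{G,S}(z) · (1 − (Σ_{s∈S} s)·z + (m−1)·z²) = 1 − z²` in `(ℤ[G])[[z]]`. -/
theorem completeGrowthSeries_freeLike (ι₁ ι₂ : Type) [Fintype ι₁] [Fintype ι₂] :
    let G := FreeLikeGroup ι₁ ι₂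
    let S := freeLikeGens ι₁ ι₂
    let m : ℕ := Fintype.card ι₁ + 2 * Fintype.card ι₂
    completeGrowthSeries S *
        (1 - PowerSeries.C (R := MonoidAlgebra ℤ G) (∑ᶠ s ∈ S, MonoidAlgebra.of ℤ G s)
              * PowerSeries.X
            + PowerSeries.C (R := MonoidAlgebra ℤ G) (((m : ℤ) - 1 : ℤ) : MonoidAlgebra ℤ G)
              * PowerSeries.X ^ 2) =
      1 - PowerSeries.X ^ 2 := by
  intro G S m
  exact FreeLike.final_co (ι₁ := ι₁) (ι₂ := ι₂)
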